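/- Let X be a nonempty finite type and let L = Fin C with C ≥ 1. Let p : Fin C → ℝ be a probability vector with p_s > 0 for all s, and for each s let z_s : X → ℝ be a probability mass function on X. Define the mixture m(x) = Σ_{s=1}^{C} p_s z_s(x). Then the Shannon entropy of the mixture satisfies H(m) ≥ Σ_{s=1}^{C} p_s H(z_s) − Σ_{s=1}^{C} p_s ln( Σ_{r=1}^{C} p_r BC(z_s, z_r) ), where BC(z_s, z_r) = Σ_{x ∈ X} √(z_s(x) z_r(x)) is the Bhattacharyya coefficient. -/

import Mathlib

open scoped BigOperators

/-- **Lemma 1 (Kolchinsky–Tracey).** Entropy lower bound for a finite mixture of discrete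
distributions in terms of pairwise Bhattacharyya coefficients. -/
theorem mixture_entropy_lower_bound
    {X : Type*} [Fintype X] [Nonempty X]
    (C : ℕ) (hC : 1 ≤ C)
    (p : Fin C → ℝ) (hp_pos : ∀ s, 0 < p s) (hp_sum : ∑ s, p s = 1)
    (z : Fin C → X → ℝ) (hz_nonneg : ∀ s x, 0 ≤ z s x) (hz_sum : ∀ s, ∑ x, z s x = 1)
    -- the mixture distribution
    (m : X → ℝ) (hm : ∀ x, m x = ∑ s, p s * z s x)
    -- Shannon entropy of a probability mass function on `X`
    (H : (X → ℝ) → ℝ) (hH : ∀ a : X → ℝ, H a = -∑ x, a x * Real.log (a x)) :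
    H m ≥ ∑ s, p s * H (z s)
      - ∑ s, p s * Real.log (∑ r, p r * ∑ x, Real.sqrt (z s x * z r x)) := by
  classical
  set g : X → ℝ := fun x => ∑ j, p j * Real.sqrt (z j x) with hg
  have hm_nonneg : ∀ x, 0 ≤ m x := fun x => by
    rw [hm]; exact Finset.sum_nonneg fun j _ => mul_nonneg (hp_pos j).le (hz_nonneg j x)
  have hm_ge : ∀ i x, p i * z i x ≤ m x := fun i x => by
    rw [hm]
    exact Finset.single_le_sum (fun j _ => mul_nonneg (hp_pos j).le (hz_nonneg j x))
      (Finset.mem_univ i)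
  have hm_pos : ∀ i x, 0 < z i x → 0 < m x := fun i x hz =>
    lt_of_lt_of_le (mul_pos (hp_pos i) hz) (hm_ge i x)
  have hg_nonneg : ∀ x, 0 ≤ g x := fun x =>
    Finset.sum_nonneg fun j _ => mul_nonneg (hp_pos j).le (Real.sqrt_nonneg _)
  -- if g x = 0 then all z j x = 0 and m x = 0
  have hg_zero : ∀ x, g x = 0 → (∀ j, z j x = 0) ∧ m x = 0 := by
    intro x hx
    have hz0 : ∀ j, z j x = 0 := by
      intro j
      have h1 := (Finset.sum_eq_zero_iff_of_nonneg
        (fun j _ => mul_nonneg (hp_pos j).le (Real.sqrt_nonneg (z j x)))).1 hx j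
        (Finset.mem_univ j)
      have hs : Real.sqrt (z j x) = 0 := by
        rcases mul_eq_zero.1 h1 with h | h
        · exact absurd h (hp_pos j).ne'
        · exact h
      exact (Real.sqrt_eq_zero (hz_nonneg j x)).1 hs
    refine ⟨hz0, ?_⟩
    rw [hm]
    exact Finset.sum_eq_zero fun j _ => by rw [hz0 j, mul_zero]
  set b : Fin C → ℝ := fun i => ∑ x, Real.sqrt (z i x * m x) with hb
  set c : Fin C → ℝ := fun i => ∑ r, p r * ∑ x, Real.sqrt (z i x * z r x) with hc
  set d : Fin C → ℝ := fun i => ∑ x, Real.sqrt (z i x) * m x / g x with hd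
  -- rewrite c
  have hc_eq : ∀ i, c i = ∑ x, Real.sqrt (z i x) * g x := by
    intro i
    rw [hc]
    simp_rw [Finset.mul_sum]
    rw [Finset.sum_comm]
    refine Finset.sum_congr rfl fun x _ => ?_
    rw [hg, Finset.mul_sum]
    refine Finset.sum_congr rfl fun j _ => ?_
    rw [Real.sqrt_mul (hz_nonneg i x)]
    ring
  have hd_nonneg : ∀ i, 0 ≤ d i := fun i =>
    Finset.sum_nonneg fun x _ => div_nonneg
      (mul_nonneg (Real.sqrt_nonneg _) (hm_nonneg x)) (hg_nonneg x)
  have hb_nonneg : ∀ i, 0 ≤ b i := fun i =>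
    Finset.sum_nonneg fun x _ => Real.sqrt_nonneg _
  -- Cauchy–Schwarz : b i ^ 2 ≤ c i * d i
  have hCS : ∀ i, b i ^ 2 ≤ c i * d i := by
    intro i
    rw [hb, hc_eq i, hd]
    refine Finset.sum_sq_le_sum_mul_sum_of_sq_eq_mul Finset.univ
      (fun x _ => mul_nonneg (Real.sqrt_nonneg _) (hg_nonneg x))
      (fun x _ => div_nonneg (mul_nonneg (Real.sqrt_nonneg _) (hm_nonneg x)) (hg_nonneg x))
      (fun x _ => ?_)
    rw [Real.sq_sqrt (mul_nonneg (hz_nonneg i x) (hm_nonneg x))]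
    by_cases hgx : g x = 0
    · rw [hgx, (hg_zero x hgx).1 i]
      simp
    · field_simp
      linear_combination (-(m x)) * Real.sq_sqrt (hz_nonneg i x)
  -- positivity of c
  have hc_pos : ∀ i, 0 < c i := by
    intro i
    have h1 : p i * ∑ x, Real.sqrt (z i x * z i x) = p i := by
      rw [show (∑ x, Real.sqrt (z i x * z i x)) = ∑ x, z i x from
        Finset.sum_congr rfl fun x _ => Real.sqrt_mul_self (hz_nonneg i x), hz_sum i, mul_one]
    calc (0:ℝ) < p i := hp_pos i
      _ = p i * ∑ x, Real.sqrt (z i x * z i x) := h1.symm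
      _ ≤ c i := Finset.single_le_sum (f := fun r => p r * ∑ x, Real.sqrt (z i x * z r x))
          (fun r _ => mul_nonneg (hp_pos r).le
            (Finset.sum_nonneg fun x _ => Real.sqrt_nonneg _)) (Finset.mem_univ i)
  -- positivity of b
  have hb_pos : ∀ i, 0 < b i := by
    intro i
    have h2 : ∀ x, Real.sqrt (p i) * z i x ≤ Real.sqrt (z i x * m x) := by
      intro x
      calc Real.sqrt (p i) * z i x = Real.sqrt (z i x * (p i * z i x)) := by
            rw [show z i x * (p i * z i x) = p i * (z i x * z i x) by ring,
              Real.sqrt_mul (hp_pos i).le, Real.sqrt_mul_self (hz_nonneg i x)]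
        _ ≤ Real.sqrt (z i x * m x) :=
            Real.sqrt_le_sqrt (mul_le_mul_of_nonneg_left (hm_ge i x) (hz_nonneg i x))
    calc (0:ℝ) < Real.sqrt (p i) := Real.sqrt_pos.2 (hp_pos i)
      _ = ∑ x, Real.sqrt (p i) * z i x := by rw [← Finset.mul_sum, hz_sum i, mul_one]
      _ ≤ b i := Finset.sum_le_sum fun x _ => h2 x
  have hd_pos : ∀ i, 0 < d i := by
    intro i
    nlinarith [hCS i, hb_pos i, hc_pos i, hd_nonneg i]
  -- key inequality: ∑ x, z i x * log (m x / z i x) ≤ log (c i) + log (d i)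
  have key : ∀ i, ∑ x, z i x * Real.log (m x / z i x) ≤ Real.log (c i) + Real.log (d i) := by
    intro i
    set K : ℝ := Real.sqrt (c i * d i) with hK
    have hKpos : 0 < K := Real.sqrt_pos.2 (mul_pos (hc_pos i) (hd_pos i))
    have hK2 : K ^ 2 = c i * d i := Real.sq_sqrt (mul_pos (hc_pos i) (hd_pos i)).le
    have hbK : b i ≤ K := by nlinarith [hCS i, hb_nonneg i, hKpos]
    have hptwise : ∀ x, z i x * Real.log (m x / z i x) ≤
        2 * (Real.sqrt (z i x * m x) / K) - 2 * z i x + z i x * Real.log (c i * d i) := by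
      intro x
      rcases eq_or_lt_of_le (hz_nonneg i x) with hz | hz
      · rw [← hz]
        simp
      · have hmx : 0 < m x := hm_pos i x hz
        have hmz : 0 < m x / z i x := div_pos hmx hz
        have ht : 0 < Real.sqrt (m x / z i x) / K :=
          div_pos (Real.sqrt_pos.2 hmz) hKpos
        have hlog := Real.log_le_sub_one_of_pos ht
        have hlogdiv : Real.log (Real.sqrt (m x / z i x) / K) =
            Real.log (m x / z i x) / 2 - Real.log K := by
          rw [Real.log_div (Real.sqrt_pos.2 hmz).ne' hKpos.ne', Real.log_sqrt hmz.le]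
        have hzsqrt : z i x * Real.sqrt (m x / z i x) = Real.sqrt (z i x * m x) := by
          have hsz : Real.sqrt (z i x) ≠ 0 := (Real.sqrt_pos.2 hz).ne'
          rw [Real.sqrt_div hmx.le, Real.sqrt_mul (hz_nonneg i x)]
          field_simp
          linear_combination (-1 : ℝ) * Real.sq_sqrt (hz_nonneg i x)
        have hlogK : 2 * Real.log K = Real.log (c i * d i) := by
          rw [← hK2, Real.log_pow]
          push_cast
          ring
        rw [hlogdiv] at hlog
        have hmul := mul_le_mul_of_nonneg_left hlog (by positivity : (0:ℝ) ≤ 2 * z i x)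
        calc z i x * Real.log (m x / z i x)
            = 2 * z i x * (Real.log (m x / z i x) / 2 - Real.log K)
              + z i x * (2 * Real.log K) := by ring
          _ ≤ 2 * z i x * (Real.sqrt (m x / z i x) / K - 1)
              + z i x * (2 * Real.log K) := by linarith
          _ = 2 * ((z i x * Real.sqrt (m x / z i x)) / K) - 2 * z i x
              + z i x * (2 * Real.log K) := by ring
          _ = 2 * (Real.sqrt (z i x * m x) / K) - 2 * z i x
              + z i x * Real.log (c i * d i) := by rw [hzsqrt, hlogK]
    calc ∑ x, z i x * Real.log (m x / z i x)
        ≤ ∑ x, (2 * (Real.sqrt (z i x * m x) / K) - 2 * z i x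
            + z i x * Real.log (c i * d i)) := Finset.sum_le_sum fun x _ => hptwise x
      _ = 2 * (b i / K) - 2 + Real.log (c i * d i) := by
          rw [Finset.sum_add_distrib, Finset.sum_sub_distrib, ← Finset.mul_sum,
            ← Finset.sum_div, ← Finset.mul_sum, ← Finset.sum_mul, hz_sum i, hb]
          ring
      _ ≤ 2 * 1 - 2 + Real.log (c i * d i) := by
          have : b i / K ≤ 1 := (div_le_one hKpos).2 hbK
          linarith
      _ = Real.log (c i) + Real.log (d i) := by
          rw [Real.log_mul (hc_pos i).ne' (hd_pos i).ne']
          ring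
  -- ∑ i, p i * d i = 1
  have hpd : ∑ i, p i * d i = 1 := by
    have h1 : ∀ x, (∑ i, p i * (Real.sqrt (z i x) * m x / g x)) = m x := by
      intro x
      by_cases hgx : g x = 0
      · rw [(hg_zero x hgx).2]
        refine Finset.sum_eq_zero fun i _ => ?_
        rw [(hg_zero x hgx).1 i]
        simp
      · have h2 : (∑ i, p i * (Real.sqrt (z i x) * m x / g x))
            = (∑ i, p i * Real.sqrt (z i x)) * (m x / g x) := by
          rw [Finset.sum_mul]
          refine Finset.sum_congr rfl fun i _ => ?_
          ring
        rw [h2]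
        show g x * (m x / g x) = m x
        rw [mul_comm, div_mul_cancel₀ _ hgx]
    have h3 : ∑ i, p i * d i = ∑ x, m x := by
      simp_rw [hd, Finset.mul_sum]
      rw [Finset.sum_comm]
      exact Finset.sum_congr rfl fun x _ => h1 x
    rw [h3]
    have : ∑ x, m x = ∑ x, ∑ s, p s * z s x := Finset.sum_congr rfl fun x _ => hm x
    rw [this, Finset.sum_comm]
    calc ∑ s, ∑ x, p s * z s x = ∑ s, p s * ∑ x, z s x := by
          exact Finset.sum_congr rfl fun s _ => (Finset.mul_sum _ _ _).symm
      _ = 1 := by simp_rw [hz_sum]; simpa using hp_sum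
  -- ∑ i, p i * log (d i) ≤ 0
  have hsum_logd : ∑ i, p i * Real.log (d i) ≤ 0 := by
    calc ∑ i, p i * Real.log (d i) ≤ ∑ i, p i * (d i - 1) :=
          Finset.sum_le_sum fun i _ => mul_le_mul_of_nonneg_left
            (Real.log_le_sub_one_of_pos (hd_pos i)) (hp_pos i).le
      _ = (∑ i, p i * d i) - ∑ i, p i := by
          rw [← Finset.sum_sub_distrib]
          exact Finset.sum_congr rfl fun i _ => by ring
      _ = 0 := by rw [hpd, hp_sum]; ring
  -- the entropy identity
  have hident : H m = (∑ i, p i * H (z i))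
      - ∑ i, p i * ∑ x, z i x * Real.log (m x / z i x) := by
    rw [hH m]
    have h2 : ∀ x, m x * Real.log (m x) = ∑ i, p i * (z i x * Real.log (m x)) := by
      intro x
      nth_rewrite 1 [hm x]
      rw [Finset.sum_mul]
      exact Finset.sum_congr rfl fun i _ => by ring
    have h3 : ∀ i x, z i x * Real.log (m x)
        = z i x * Real.log (z i x) + z i x * Real.log (m x / z i x) := by
      intro i x
      rcases eq_or_lt_of_le (hz_nonneg i x) with hz | hz
      · rw [← hz]; ring
      · rw [Real.log_div (hm_pos i x hz).ne' hz.ne']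
        ring
    have h4 : ∑ x, m x * Real.log (m x)
        = ∑ i, p i * (∑ x, z i x * Real.log (z i x) + ∑ x, z i x * Real.log (m x / z i x)) := by
      rw [show (∑ x, m x * Real.log (m x))
          = ∑ x, ∑ i, p i * (z i x * Real.log (m x)) from
          Finset.sum_congr rfl fun x _ => h2 x, Finset.sum_comm]
      refine Finset.sum_congr rfl fun i _ => ?_
      rw [← Finset.mul_sum, ← Finset.sum_add_distrib]
      congr 1
      exact Finset.sum_congr rfl fun x _ => h3 i x
    rw [h4]
    have h5 : ∑ i, p i * (∑ x, z i x * Real.log (z i x) + ∑ x, z i x * Real.log (m x / z i x))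
        = (-∑ i, p i * H (z i)) + ∑ i, p i * ∑ x, z i x * Real.log (m x / z i x) := by
      rw [show -∑ i, p i * H (z i) = ∑ i, -(p i * H (z i)) from by
        rw [Finset.sum_neg_distrib], ← Finset.sum_add_distrib]
      refine Finset.sum_congr rfl fun i _ => ?_
      rw [hH (z i)]
      ring
    linarith [h5]
  -- final assembly
  have hfinal1 : ∑ i, p i * ∑ x, z i x * Real.log (m x / z i x)
      ≤ (∑ i, p i * Real.log (c i)) + ∑ i, p i * Real.log (d i) := by
    rw [← Finset.sum_add_distrib]
    refine Finset.sum_le_sum fun i _ => ?_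
    calc p i * ∑ x, z i x * Real.log (m x / z i x)
        ≤ p i * (Real.log (c i) + Real.log (d i)) :=
          mul_le_mul_of_nonneg_left (key i) (hp_pos i).le
      _ = p i * Real.log (c i) + p i * Real.log (d i) := by ring
  have hcs : ∀ s, (∑ r, p r * ∑ x, Real.sqrt (z s x * z r x)) = c s := fun s => rfl
  simp_rw [hcs]
  linarith [hident, hfinal1, hsum_logd]
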